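/- For all x, y ∈ ℝ^d, the indicator 1_{Π_1(x)}(y) satisfies 1_{Π_1(x)}(y) ≤ Re ∫_{ℝ^d} e^{-i s·x}·r(s)·e^{i s·y} ds. -/

import Mathlib

open MeasureTheory Filter
open scoped RealInnerProductSpace
open FourierTransform Real Complex

lemma myinv (γ₀ g : ℝ → ℝ) (hγcont : Continuous γ₀) (hγint : Integrable γ₀)
    (hγhat : ∀ ξ : ℝ, (∫ x : ℝ, Complex.exp (-((ξ : ℂ) * (x : ℂ)) * Complex.I) * (γ₀ x : ℂ))
      = (g ξ : ℂ))
    (hgcont : Continuous g) (hgcs : HasCompactSupport g) (t : ℝ) :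
    (1 / (2 * π) : ℂ) * ∫ s : ℝ, (g s : ℂ) * Complex.exp ((s : ℂ) * t * Complex.I) = (γ₀ t : ℂ) := by
  set f : ℝ → ℂ := fun x => (γ₀ x : ℂ) with hf
  have hfi : Integrable f := hγint.ofReal
  have hfc : Continuous f := Complex.continuous_ofReal.comp hγcont
  have hfour : ∀ ξ : ℝ, 𝓕 f ξ = (g (2 * π * ξ) : ℂ) := by
    intro ξ
    rw [Real.fourier_real_eq]
    rw [← hγhat (2 * π * ξ)]
    congr 1 with x
    rw [Circle.smul_def, Real.fourierChar_apply, smul_eq_mul]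
    push_cast
    ring_nf
    rfl
  have hgint : Integrable (fun ξ : ℝ => (g ξ : ℂ)) :=
    (hgcont.integrable_of_hasCompactSupport hgcs).ofReal
  have hFi : Integrable (𝓕 f) := by
    have : Integrable (fun ξ : ℝ => (g (2 * π * ξ) : ℂ)) := by
      have h2π : (2 * π) ≠ 0 := by positivity
      exact (hgint.comp_mul_left' h2π)
    exact this.congr (Filter.Eventually.of_forall fun ξ => (hfour ξ).symm)
  have hinv := hfi.fourierInv_fourier_eq hFi hfc.continuousAt (v := t)
  have hft : f t = (γ₀ t : ℂ) := rfl
  rw [← hft, ← hinv, Real.fourierInv_eq]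
  have : (∫ ξ : ℝ, 𝐞 (⟪ξ, t⟫) • 𝓕 f ξ)
      = ∫ ξ : ℝ, (fun η : ℝ => (g η : ℂ) * Complex.exp ((η : ℂ) * t * Complex.I)) (2 * π * ξ) := by
    congr 1 with ξ
    rw [hfour ξ, Circle.smul_def, Real.fourierChar_apply, smul_eq_mul, real_inner_comm]
    have : ⟪t, ξ⟫ = t * ξ := by simp only [RCLike.inner_apply, conj_trivial]; ring
    rw [this]
    push_cast
    ring_nf
  rw [this, MeasureTheory.Measure.integral_comp_mul_left
    (fun η : ℝ => (g η : ℂ) * Complex.exp ((η : ℂ) * t * Complex.I)) (2 * π)]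
  have h2π : (0:ℝ) < 2 * π := by positivity
  rw [abs_of_pos (by positivity)]
  rw [Complex.real_smul]
  push_cast
  rw [one_div]

lemma key1 (ε : ℝ) (hε : 0 < ε) (γ₀ g : ℝ → ℝ)
    (hγcont : Continuous γ₀) (hγint : Integrable γ₀)
    (hγhat : ∀ ξ : ℝ, (∫ x : ℝ, Complex.exp (-((ξ : ℂ) * (x : ℂ)) * Complex.I) * (γ₀ x : ℂ))
      = (g ξ : ℂ))
    (hgcont : Continuous g) (hgsupp : Function.support g ⊆ Set.Icc (-ε) ε)
    (r₀ : ℝ → ℝ)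
    (hr₀ : ∀ s : ℝ, s ≠ 0 → r₀ s = (1 / (2 * Real.pi)) * (Real.sin s / s) * g s)
    (t : ℝ) :
    (∫ s : ℝ, (r₀ s : ℂ) * Complex.exp ((s : ℂ) * t * Complex.I))
      = ((2⁻¹ * ∫ u in (-1:ℝ)..1, γ₀ (t + u) : ℝ) : ℂ) := by
  have hgcs : HasCompactSupport g := HasCompactSupport.intro isCompact_Icc
    (fun x hx => by
      by_contra h
      exact hx (hgsupp h))
  have hae : ∀ᵐ s : ℝ, (s : ℝ) ≠ 0 := by
    rw [MeasureTheory.ae_iff]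
    simp only [ne_eq, not_not]
    have : {a : ℝ | a = 0} = {(0:ℝ)} := by ext s; simp
    rw [this, Real.volume_singleton]
  -- step: sinc formula
  have hsinc : ∀ s : ℝ, s ≠ 0 → ((Real.sin s / s : ℝ) : ℂ)
      = 2⁻¹ * ∫ u in (-1:ℝ)..1, Complex.exp ((s : ℂ) * u * Complex.I) := by
    intro s hs
    have hc : ((s : ℂ) * Complex.I) ≠ 0 := by
      simp [Complex.ofReal_eq_zero, hs, Complex.I_ne_zero]
    have : ∫ u in (-1:ℝ)..1, Complex.exp ((s : ℂ) * u * Complex.I)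
        = ∫ u in (-1:ℝ)..1, Complex.exp (((s : ℂ) * Complex.I) * u) := by
      congr 1 with u; ring_nf
    rw [this, integral_exp_mul_complex hc]
    rw [show ((s:ℂ) * Complex.I) * (1:ℝ) = (s:ℂ) * Complex.I by push_cast; ring,
      show ((s:ℂ) * Complex.I) * ((-1:ℝ):ℂ) = (-s:ℂ) * Complex.I by push_cast; ring]
    rw [Complex.exp_mul_I, Complex.exp_mul_I]
    rw [show ((-s : ℂ)) = ((-s : ℝ) : ℂ) by push_cast; ring]
    rw [← Complex.ofReal_sin, ← Complex.ofReal_cos, ← Complex.ofReal_sin, ← Complex.ofReal_cos]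
    rw [Real.sin_neg, Real.cos_neg]
    have hsC : (s : ℂ) ≠ 0 := Complex.ofReal_ne_zero.2 hs
    push_cast
    field_simp
    ring
  set c : ℂ := 2⁻¹ * (1 / (2 * π)) with hc
  set Φ : ℝ → ℝ → ℂ := fun s u => c * (g s : ℂ) * Complex.exp ((s : ℂ) * ((t + u : ℝ) : ℂ) * Complex.I) with hΦ
  have step1 : (∫ s : ℝ, (r₀ s : ℂ) * Complex.exp ((s : ℂ) * t * Complex.I))
      = ∫ s : ℝ, ∫ u in Set.Ioc (-1:ℝ) 1, Φ s u := by
    refine integral_congr_ae ?_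
    filter_upwards [hae] with s hs
    rw [hr₀ s hs]
    have hint : (∫ u in Set.Ioc (-1:ℝ) 1, Φ s u)
        = (c * (g s : ℂ) * Complex.exp ((s:ℂ) * t * Complex.I))
            * ∫ u in (-1:ℝ)..1, Complex.exp ((s:ℂ) * u * Complex.I) := by
      rw [← intervalIntegral.integral_of_le (by norm_num : (-1:ℝ) ≤ 1),
        ← intervalIntegral.integral_const_mul]
      congr 1 with u
      rw [hΦ]
      simp only []
      rw [show (s:ℂ) * ((t + u : ℝ) : ℂ) * Complex.I
          = (s:ℂ) * t * Complex.I + (s:ℂ) * u * Complex.I by push_cast; ring,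
        Complex.exp_add, hc]
      ring
    have h2 : (∫ u in (-1:ℝ)..1, Complex.exp ((s:ℂ) * u * Complex.I))
        = 2 * ((Real.sin s / s : ℝ) : ℂ) := by
      rw [hsinc s hs]; ring
    rw [hint, h2, hc]
    push_cast
    ring
  have hΦint : Integrable (Function.uncurry Φ)
      ((volume : Measure ℝ).prod ((volume : Measure ℝ).restrict (Set.Ioc (-1:ℝ) 1))) := by
    have hmeas : AEStronglyMeasurable (Function.uncurry Φ)
        ((volume : Measure ℝ).prod ((volume : Measure ℝ).restrict (Set.Ioc (-1:ℝ) 1))) := by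
      apply Continuous.aestronglyMeasurable
      apply Continuous.mul
      · exact (continuous_const.mul (Complex.continuous_ofReal.comp (hgcont.comp continuous_fst)))
      · exact Complex.continuous_exp.comp
          ((Complex.continuous_ofReal.comp continuous_fst).mul
            ((Complex.continuous_ofReal.comp (continuous_const.add continuous_snd))) |>.mul continuous_const)
    have hbound : Integrable (fun p : ℝ × ℝ => (‖c‖ * |g p.1|) * (1 : ℝ))
        ((volume : Measure ℝ).prod ((volume : Measure ℝ).restrict (Set.Ioc (-1:ℝ) 1))) := by
      exact Integrable.mul_prod
        ((hgcont.integrable_of_hasCompactSupport hgcs).abs.const_mul ‖c‖)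
        (integrableOn_const (by simp [Real.volume_Ioc]))
    refine hbound.mono' hmeas ?_
    refine Filter.Eventually.of_forall (fun p => ?_)
    rw [Function.uncurry, hΦ]
    simp only []
    rw [show ((p.1:ℂ) * ((t + p.2 : ℝ) : ℂ) * Complex.I) = (((p.1 * (t + p.2) : ℝ)) : ℂ) * Complex.I by
      push_cast; ring]
    rw [norm_mul, norm_mul, Complex.norm_exp_ofReal_mul_I]
    simp [Complex.norm_real]
  have step2 : (∫ s : ℝ, ∫ u in Set.Ioc (-1:ℝ) 1, Φ s u)
      = ∫ u in Set.Ioc (-1:ℝ) 1, ∫ s : ℝ, Φ s u := integral_integral_swap hΦint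
  have step3 : ∀ u : ℝ, (∫ s : ℝ, Φ s u) = (2⁻¹ : ℂ) * (γ₀ (t + u) : ℂ) := by
    intro u
    have := myinv γ₀ g hγcont hγint hγhat hgcont hgcs (t + u)
    rw [hΦ]
    simp only []
    rw [show (fun s : ℝ => c * (g s : ℂ) * Complex.exp ((s : ℂ) * ((t + u : ℝ) : ℂ) * Complex.I))
        = (fun s : ℝ => (2⁻¹ : ℂ) * ((1 / (2 * π) : ℂ) * ((g s : ℂ) * Complex.exp ((s : ℂ) * ((t + u : ℝ) : ℂ) * Complex.I)))) by
      funext s; rw [hc]; ring]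
    rw [integral_const_mul, integral_const_mul, this]
  rw [step1, step2]
  simp only [step3]
  rw [integral_const_mul]
  have : (∫ u in Set.Ioc (-1:ℝ) 1, ((γ₀ (t + u) : ℝ) : ℂ))
      = ((∫ u in Set.Ioc (-1:ℝ) 1, γ₀ (t + u) : ℝ) : ℂ) := integral_ofReal
  rw [this, ← intervalIntegral.integral_of_le (by norm_num : (-1:ℝ) ≤ 1)]
  push_cast
  ring

/-- Lemma `lemma-gamma`: pointwise smoothing bound for the indicator of a cube. -/
theorem indicator_cube_le_re_integral
    (d : ℕ) (hd : 0 < d)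
    (ε : ℝ) (hε : 0 < ε)
    (γ₀ : ℝ → ℝ) (g : ℝ → ℝ)
    (hγcont : Continuous γ₀) (hγint : Integrable γ₀) (hγnonneg : ∀ x, 0 ≤ γ₀ x)
    (hγone : ∀ x ∈ Set.Icc (-2 : ℝ) 2, 1 ≤ γ₀ x)
    (hγhat : ∀ ξ : ℝ, (∫ x : ℝ, Complex.exp (-((ξ : ℂ) * (x : ℂ)) * Complex.I) * (γ₀ x : ℂ))
      = (g ξ : ℂ))
    (hgeven : ∀ ξ : ℝ, g (-ξ) = g ξ)
    (hgC2 : ContDiff ℝ 2 g)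
    (hgsupp : Function.support g ⊆ Set.Icc (-ε) ε)
    (r₀ : ℝ → ℝ)
    (hr₀ : ∀ s : ℝ, s ≠ 0 → r₀ s = (1 / (2 * Real.pi)) * (Real.sin s / s) * g s)
    (hr₀0 : r₀ 0 = (1 / (2 * Real.pi)) * g 0) :
    ∀ x y : EuclideanSpace ℝ (Fin d),
      Set.indicator {y : EuclideanSpace ℝ (Fin d) |
          ∀ j, y j ∈ Set.Ioc (x j - 1) (x j + 1)} (fun _ => (1 : ℝ)) y
        ≤ (∫ s : EuclideanSpace ℝ (Fin d),
            Complex.exp (-(⟪s, x⟫ : ℂ) * Complex.I) * ((∏ j, r₀ (s j) : ℝ) : ℂ)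
              * Complex.exp ((⟪s, y⟫ : ℂ) * Complex.I)).re := by
  intro x y
  have hgcont : Continuous g := hgC2.continuous
  set F : ℝ → ℝ := fun t => 2⁻¹ * ∫ u in (-1:ℝ)..1, γ₀ (t + u) with hF
  have hkey : ∀ t : ℝ, (∫ s : ℝ, (r₀ s : ℂ) * Complex.exp ((s : ℂ) * t * Complex.I))
      = ((F t : ℝ) : ℂ) := fun t =>
    key1 ε hε γ₀ g hγcont hγint hγhat hgcont hgsupp r₀ hr₀ t
  -- interval integrability of shifted γ₀
  have hii : ∀ t : ℝ, IntervalIntegrable (fun u => γ₀ (t + u)) volume (-1) 1 :=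
    fun t => ((hγcont.comp (continuous_const.add continuous_id)).intervalIntegrable _ _)
  have hFnonneg : ∀ t : ℝ, 0 ≤ F t := by
    intro t
    have : 0 ≤ ∫ u in (-1:ℝ)..1, γ₀ (t + u) :=
      intervalIntegral.integral_nonneg (by norm_num) (fun u _ => hγnonneg _)
    rw [hF]
    positivity
  have hFone : ∀ t : ℝ, t ∈ Set.Ioc (-1:ℝ) 1 → 1 ≤ F t := by
    intro t ht
    have h2 : (∫ u in (-1:ℝ)..1, (1:ℝ)) ≤ ∫ u in (-1:ℝ)..1, γ₀ (t + u) := by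
      apply intervalIntegral.integral_mono_on (by norm_num)
        (intervalIntegrable_const) (hii t)
      intro u hu
      apply hγone
      constructor
      · nlinarith [ht.1, hu.1]
      · nlinarith [ht.2, hu.2]
    rw [intervalIntegral.integral_const] at h2
    simp only [smul_eq_mul, mul_one] at h2
    rw [hF]
    simp only []
    nlinarith [h2]
  -- main computation of the integral
  have main : (∫ s : EuclideanSpace ℝ (Fin d),
      Complex.exp (-(⟪s, x⟫ : ℂ) * Complex.I) * ((∏ j, r₀ (s j) : ℝ) : ℂ)
        * Complex.exp ((⟪s, y⟫ : ℂ) * Complex.I))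
      = ((∏ j, F (y j - x j) : ℝ) : ℂ) := by
    have hmp := (EuclideanSpace.volume_preserving_symm_measurableEquiv_toLp (Fin d)).symm
    rw [← hmp.integral_comp (MeasurableEquiv.measurableEmbedding _)]
    have hpt : ∀ v : Fin d → ℝ,
        (Complex.exp (-(⟪((MeasurableEquiv.toLp 2 (Fin d → ℝ)).symm.symm v), x⟫ : ℂ) * Complex.I)
          * ((∏ j, r₀ (((MeasurableEquiv.toLp 2 (Fin d → ℝ)).symm.symm v) j) : ℝ) : ℂ)
          * Complex.exp ((⟪((MeasurableEquiv.toLp 2 (Fin d → ℝ)).symm.symm v), y⟫ : ℂ) * Complex.I))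
        = ∏ j, ((r₀ (v j) : ℂ) * Complex.exp ((v j : ℂ) * ((y j - x j : ℝ) : ℂ) * Complex.I)) := by
      intro v
      have hcoord : ∀ j, ((MeasurableEquiv.toLp 2 (Fin d → ℝ)).symm.symm v) j = v j := by
        intro j
        simp
      have hix : (⟪((MeasurableEquiv.toLp 2 (Fin d → ℝ)).symm.symm v), x⟫ : ℝ)
          = ∑ j, v j * x j := by
        rw [PiLp.inner_apply]
        simp only [hcoord, RCLike.inner_apply, conj_trivial]
        exact Finset.sum_congr rfl fun _ _ => mul_comm _ _
      have hiy : (⟪((MeasurableEquiv.toLp 2 (Fin d → ℝ)).symm.symm v), y⟫ : ℝ)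
          = ∑ j, v j * y j := by
        rw [PiLp.inner_apply]
        simp only [hcoord, RCLike.inner_apply, conj_trivial]
        exact Finset.sum_congr rfl fun _ _ => mul_comm _ _
      rw [hix, hiy]
      simp_rw [hcoord]
      rw [Finset.prod_mul_distrib, ← Complex.ofReal_prod]
      rw [mul_comm (Complex.exp _), mul_assoc, ← Complex.exp_add]
      congr 1
      rw [show (-((∑ j, v j * x j : ℝ) : ℂ) * Complex.I + ((∑ j, v j * y j : ℝ) : ℂ) * Complex.I)
          = ∑ j, ((v j : ℂ) * ((y j - x j : ℝ) : ℂ) * Complex.I) by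
        push_cast
        rw [neg_mul, Finset.sum_mul, Finset.sum_mul, ← Finset.sum_neg_distrib,
          ← Finset.sum_add_distrib]
        congr 1 with j
        ring]
      rw [Complex.exp_sum]
    rw [show (fun v : Fin d → ℝ =>
        (Complex.exp (-(⟪((MeasurableEquiv.toLp 2 (Fin d → ℝ)).symm.symm v), x⟫ : ℂ) * Complex.I)
          * ((∏ j, r₀ (((MeasurableEquiv.toLp 2 (Fin d → ℝ)).symm.symm v) j) : ℝ) : ℂ)
          * Complex.exp ((⟪((MeasurableEquiv.toLp 2 (Fin d → ℝ)).symm.symm v), y⟫ : ℂ) * Complex.I)))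
        = fun v : Fin d → ℝ => ∏ j,
            ((r₀ (v j) : ℂ) * Complex.exp ((v j : ℂ) * ((y j - x j : ℝ) : ℂ) * Complex.I))
      from funext hpt]
    rw [MeasureTheory.integral_fintype_prod_volume_eq_prod (ι := Fin d)
      (f := fun j (a : ℝ) => (r₀ a : ℂ) * Complex.exp ((a : ℂ) * ((y j - x j : ℝ) : ℂ) * Complex.I))]
    rw [Complex.ofReal_prod]
    congr 1 with j
    exact hkey (y j - x j)
  rw [main, Complex.ofReal_re]
  by_cases hy : y ∈ {y : EuclideanSpace ℝ (Fin d) |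
      ∀ j, y j ∈ Set.Ioc (x j - 1) (x j + 1)}
  · rw [Set.indicator_of_mem hy]
    have h1 : ∀ j : Fin d, j ∈ Finset.univ → (1:ℝ) ≤ F (y j - x j) := by
      intro j _
      apply hFone
      have h := hy j
      exact ⟨by linarith [h.1], by linarith [h.2]⟩
    calc (1:ℝ) = ∏ _j : Fin d, (1:ℝ) := by simp
    _ ≤ ∏ j, F (y j - x j) :=
      Finset.prod_le_prod (fun j _ => zero_le_one) h1
  · rw [Set.indicator_of_notMem hy]
    exact Finset.prod_nonneg (fun j _ => hFnonneg _)
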